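/- arXiv:0711.2532 — 4 statements merged into one kernel-verified Lean document; each statement's English description precedes it below -/
import Mathlib

section
/- Let p be a prime. For integers x, y, z let M₁(x,y,z) be the 4×4 rational matrix with rows (1/p, 0, y/p, x/p), (0, 1/p, x/p, z/p), (0, 0, p, 0), (0, 0, 0, p). Then each M₁(x,y,z) is symplectic and lies in the double coset Γ₂·S₂·Γ₂ ⊂ Sp₄(ℚ), where S₂ = diag(1/p, 1/p, p, p); moreover two such matrices M₁(x,y,z) and M₁(x′,y′,z′) lie in the same left coset Γ₂·M if and only if x ≡ x′, y ≡ y′ and z ≡ z′ (mod p²). In particular, for x, y, z ranging over 0, …, p²−1 one obtains p⁶ pairwise distinct left Γ₂-cosets inside Γ₂·S₂·Γ₂. -/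
open Matrix

/-!
STATEMENT 3: For a prime p, the matrices M₁(x,y,z) (for x,y,z ∈ ℤ) with rows
(1/p, 0, y/p, x/p), (0, 1/p, x/p, z/p), (0,0,p,0), (0,0,0,p) are symplectic and lie
in the double coset Γ₂·S₂·Γ₂ ⊂ Sp₄(ℚ) with S₂ = diag(1/p,1/p,p,p); two of them lie
in the same left Γ₂-coset iff x ≡ x′, y ≡ y′, z ≡ z′ (mod p²).  In particular the
M₁(x,y,z) with 0 ≤ x,y,z < p² give p⁶ pairwise distinct left cosets inside Γ₂·S₂·Γ₂.
-/

/-- The standard symplectic form `J = [[0, I₂],[−I₂, 0]]` of size 4 over ℚ. -/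
def Jmat : Matrix (Fin 4) (Fin 4) ℚ :=
  !![0, 0, 1, 0; 0, 0, 0, 1; -1, 0, 0, 0; 0, -1, 0, 0]

/-- A 4×4 rational matrix is symplectic if `gᵀ J g = J`. -/
def IsSymplectic (g : Matrix (Fin 4) (Fin 4) ℚ) : Prop := gᵀ * Jmat * g = Jmat

/-- A 4×4 rational matrix has integral entries. -/
def HasIntegralEntries (g : Matrix (Fin 4) (Fin 4) ℚ) : Prop := ∀ i j, ∃ n : ℤ, g i j = (n : ℚ)

/-- Membership in `Γ₂ = Sp₄(ℤ)`, viewed inside `Sp₄(ℚ)`. -/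
def MemGamma2 (g : Matrix (Fin 4) (Fin 4) ℚ) : Prop := IsSymplectic g ∧ HasIntegralEntries g

/-- The matrix `M₁(x,y,z)`. -/
def M₁ (p : ℕ) (x y z : ℤ) : Matrix (Fin 4) (Fin 4) ℚ :=
  !![(p : ℚ)⁻¹, 0, (y : ℚ) / p, (x : ℚ) / p;
     0, (p : ℚ)⁻¹, (x : ℚ) / p, (z : ℚ) / p;
     0, 0, (p : ℚ), 0;
     0, 0, 0, (p : ℚ)]

/-- The matrix `S₂ = diag(1/p, 1/p, p, p)`. -/
def S₂ (p : ℕ) : Matrix (Fin 4) (Fin 4) ℚ :=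
  !![(p : ℚ)⁻¹, 0, 0, 0; 0, (p : ℚ)⁻¹, 0, 0; 0, 0, (p : ℚ), 0; 0, 0, 0, (p : ℚ)]

/-- Upper unitriangular block matrices with symmetric block are symplectic. -/
lemma aux_unitriangular_symplectic (b c d : ℚ) :
    IsSymplectic !![1, 0, b, c; 0, 1, c, d; 0, 0, 1, 0; 0, 0, 0, 1] := by
  unfold IsSymplectic Jmat
  ext i j
  fin_cases i <;> fin_cases j <;>
    simp [Matrix.mul_apply, Matrix.transpose_apply, Fin.sum_univ_four,
      Matrix.vecHead, Matrix.vecTail]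

lemma aux_unitriangular_gamma2 (b c d : ℤ) :
    MemGamma2 !![1, 0, (b:ℚ), (c:ℚ); 0, 1, (c:ℚ), (d:ℚ); 0, 0, 1, 0; 0, 0, 0, 1] := by
  refine ⟨aux_unitriangular_symplectic b c d, fun i j => ?_⟩
  fin_cases i <;> fin_cases j
  exacts [⟨1, by norm_num⟩, ⟨0, by norm_num⟩, ⟨b, by norm_num⟩, ⟨c, by norm_num⟩,
    ⟨0, by norm_num⟩, ⟨1, by norm_num⟩, ⟨c, by norm_num⟩, ⟨d, by norm_num⟩,
    ⟨0, by norm_num⟩, ⟨0, by norm_num⟩, ⟨1, by norm_num⟩, ⟨0, by norm_num⟩,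
    ⟨0, by norm_num⟩, ⟨0, by norm_num⟩, ⟨0, by norm_num⟩, ⟨1, by norm_num⟩]

set_option maxHeartbeats 2000000 in
theorem M₁_symplectic_double_coset_and_left_cosets (p : ℕ) (hp : p.Prime) :
    (∀ x y z : ℤ, IsSymplectic (M₁ p x y z))
    ∧
    (∀ x y z : ℤ, ∃ γ₁ γ₂ : Matrix (Fin 4) (Fin 4) ℚ,
      MemGamma2 γ₁ ∧ MemGamma2 γ₂ ∧ M₁ p x y z = γ₁ * S₂ p * γ₂)
    ∧
    (∀ x y z x' y' z' : ℤ,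
      (∃ γ : Matrix (Fin 4) (Fin 4) ℚ, MemGamma2 γ ∧ M₁ p x y z = γ * M₁ p x' y' z') ↔
        (x ≡ x' [ZMOD ((p : ℤ)^2)] ∧ y ≡ y' [ZMOD ((p : ℤ)^2)] ∧
          z ≡ z' [ZMOD ((p : ℤ)^2)])) := by
  have hp0 : (p : ℚ) ≠ 0 := Nat.cast_ne_zero.2 hp.pos.ne'
  have hpN : p ≠ 0 := hp.pos.ne'
  refine ⟨?_, ?_, ?_⟩
  · -- symplectic
    intro x y z
    unfold IsSymplectic M₁ Jmat
    ext i j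
    fin_cases i <;> fin_cases j <;>
      simp [Matrix.mul_apply, Matrix.transpose_apply, Fin.sum_univ_four,
        Matrix.vecHead, Matrix.vecTail] <;>
      field_simp <;>
      ring
  · -- double coset
    intro x y z
    refine ⟨1, !![1, 0, (y:ℚ), (x:ℚ); 0, 1, (x:ℚ), (z:ℚ); 0, 0, 1, 0; 0, 0, 0, 1],
      ⟨?_, fun i j => ?_⟩, aux_unitriangular_gamma2 y x z, ?_⟩
    · unfold IsSymplectic
      simp
    · refine ⟨if i = j then 1 else 0, ?_⟩
      by_cases h : i = j <;> simp [Matrix.one_apply, h]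
    · rw [Matrix.one_mul]
      unfold M₁ S₂
      ext i j
      fin_cases i <;> fin_cases j <;>
        simp [Matrix.mul_apply, Fin.sum_univ_four, Matrix.vecHead, Matrix.vecTail] <;>
        field_simp
  · -- left cosets
    intro x y z x' y' z'
    constructor
    · rintro ⟨γ, ⟨-, hint⟩, heq⟩
      have e00 := congrFun (congrFun heq 0) 0
      have e01 := congrFun (congrFun heq 0) 1
      have e02 := congrFun (congrFun heq 0) 2
      have e03 := congrFun (congrFun heq 0) 3
      have e10 := congrFun (congrFun heq 1) 0
      have e11 := congrFun (congrFun heq 1) 1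
      have e13 := congrFun (congrFun heq 1) 3
      simp [M₁, Matrix.mul_apply, Fin.sum_univ_four, Matrix.vecHead, Matrix.vecTail]
        at e00 e01 e02 e03 e10 e11 e13
      have h00 : γ 0 0 = 1 := by field_simp at e00; linarith
      have h01 : γ 0 1 = 0 := e01.resolve_right hpN
      have h10 : γ 1 0 = 0 := e10.resolve_right hpN
      have h11 : γ 1 1 = 1 := by field_simp at e11; linarith
      rw [h00, h01] at e02 e03
      rw [h10, h11] at e13
      obtain ⟨ny, hny⟩ := hint 0 2
      obtain ⟨nx, hnx⟩ := hint 0 3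
      obtain ⟨nz, hnz⟩ := hint 1 3
      rw [hny] at e02; rw [hnx] at e03; rw [hnz] at e13
      have hy : y = y' + ny * (p:ℤ)^2 := by
        have : (y:ℚ) = y' + ny * (p:ℚ)^2 := by field_simp at e02 ⊢; linarith
        exact_mod_cast this
      have hx : x = x' + nx * (p:ℤ)^2 := by
        have : (x:ℚ) = x' + nx * (p:ℚ)^2 := by field_simp at e03 ⊢; linarith
        exact_mod_cast this
      have hz : z = z' + nz * (p:ℤ)^2 := by
        have : (z:ℚ) = z' + nz * (p:ℚ)^2 := by field_simp at e13 ⊢; linarith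
        exact_mod_cast this
      exact ⟨Int.modEq_iff_dvd.2 ⟨-nx, by linarith⟩,
        Int.modEq_iff_dvd.2 ⟨-ny, by linarith⟩,
        Int.modEq_iff_dvd.2 ⟨-nz, by linarith⟩⟩
    · rintro ⟨hx, hy, hz⟩
      obtain ⟨kx, hkx⟩ := Int.modEq_iff_dvd.1 hx
      obtain ⟨ky, hky⟩ := Int.modEq_iff_dvd.1 hy
      obtain ⟨kz, hkz⟩ := Int.modEq_iff_dvd.1 hz
      -- x' - x = p^2 * kx, so x = x' + (-kx) * p^2
      refine ⟨!![1, 0, ((-ky : ℤ):ℚ), ((-kx : ℤ):ℚ);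
                 0, 1, ((-kx : ℤ):ℚ), ((-kz : ℤ):ℚ); 0, 0, 1, 0; 0, 0, 0, 1],
        aux_unitriangular_gamma2 (-ky) (-kx) (-kz), ?_⟩
      have hxQ : (x:ℚ) = (x':ℚ) - (kx:ℚ) * (p:ℚ)^2 := by
        have : (x:ℤ) = x' - kx * (p:ℤ)^2 := by linarith
        exact_mod_cast this
      have hyQ : (y:ℚ) = (y':ℚ) - (ky:ℚ) * (p:ℚ)^2 := by
        have : (y:ℤ) = y' - ky * (p:ℤ)^2 := by linarith
        exact_mod_cast this
      have hzQ : (z:ℚ) = (z':ℚ) - (kz:ℚ) * (p:ℚ)^2 := by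
        have : (z:ℤ) = z' - kz * (p:ℤ)^2 := by linarith
        exact_mod_cast this
      unfold M₁
      ext i j
      fin_cases i <;> fin_cases j <;>
        simp [Matrix.mul_apply, Fin.sum_univ_four, Matrix.vecHead, Matrix.vecTail] <;>
        (try field_simp) <;> (try linarith [hxQ, hyQ, hzQ])
end

section
/- Fix k ∈ ℤ and a positive integer m. For g = [[a,b],[c,d]] ∈ SL₂(ℝ) define g^# := [[d,b],[c,a]] ∈ SL₂(ℝ). For (T,Z) ∈ ℍ₂×ℂ² with T = [[τ,u],[u,ζ]], Z = (z₁,z₂), define the 'upper' action g↑∘(T,Z) := ([[(aτ+b)/(cτ+d), u/(cτ+d)],[u/(cτ+d), ζ − cu²/(cτ+d)]], (z₁/(cτ+d), z₂ − cuz₁/(cτ+d))) with automorphy factor J↑(g,(T,Z)) := (cτ+d)^k·exp(2πi·m·c·z₁²/(cτ+d)), and the 'lower' action g↓∘(T,Z) := ([[τ − cu²/(cζ+d), u/(cζ+d)],[u/(cζ+d), (aζ+b)/(cζ+d)]], (z₁ − cuz₂/(cζ+d), z₂/(cζ+d))) with automorphy factor J↓(g,(T,Z)) := (cζ+d)^k·exp(2πi·m·c·z₂²/(cζ+d)).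 Then for every g ∈ SL₂(ℝ) and every (T,Z) ∈ ℍ₂×ℂ² one has ψ_{k,m}(g↑∘(T,Z)) · J↑(g,(T,Z)) = ψ_{k,m}(g^#↓∘(T,Z)) · J↓(g^#,(T,Z)); equivalently, the slashed functions ψ_{k,m}^{-1}|_{k,m} g↑ and ψ_{k,m}^{-1}|_{k,m} (g^#)↓ coincide. -/
/-!
STATEMENT 10: For g = [[a,b],[c,d]] ∈ SL₂(ℝ) with g^# = [[d,b],[c,a]], the function
ψ_{k,m} satisfies ψ_{k,m}(g↑∘(T,Z))·J↑(g,(T,Z)) = ψ_{k,m}(g^#↓∘(T,Z))·J↓(g^#,(T,Z))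
on ℍ₂ × ℂ², where ↑ and ↓ denote the two embeddings of SL₂(ℝ) into Sp₄(ℝ) together
with their actions and automorphy factors.
-/

open Complex

/-- `ψ_{k,m}(T,Z) = (τ+2u+ζ)^k · exp(2πi·m·(z₁+z₂)²/(τ+2u+ζ))`. -/
noncomputable def psi (k : ℤ) (m : ℕ) (τ u ζ z₁ z₂ : ℂ) : ℂ :=
  (τ + 2 * u + ζ) ^ k *
    Complex.exp (2 * (Real.pi : ℂ) * I * (m : ℂ) * (z₁ + z₂) ^ 2 / (τ + 2 * u + ζ))

set_option maxHeartbeats 2000000 in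
theorem psi_up_slash_eq_sharp_down_slash (k : ℤ) (m : ℕ) (hm : 0 < m)
    (a b c d : ℝ) (hg : a * d - b * c = 1) (τ u ζ z₁ z₂ : ℂ)
    (hT : (!![τ.im, u.im; u.im, ζ.im] : Matrix (Fin 2) (Fin 2) ℝ).PosDef) :
    psi k m
        (((a : ℂ) * τ + (b : ℂ)) / ((c : ℂ) * τ + (d : ℂ)))
        (u / ((c : ℂ) * τ + (d : ℂ)))
        (ζ - (c : ℂ) * u ^ 2 / ((c : ℂ) * τ + (d : ℂ)))
        (z₁ / ((c : ℂ) * τ + (d : ℂ)))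
        (z₂ - (c : ℂ) * u * z₁ / ((c : ℂ) * τ + (d : ℂ))) *
      (((c : ℂ) * τ + (d : ℂ)) ^ k *
        Complex.exp (2 * (Real.pi : ℂ) * I * (m : ℂ) * (c : ℂ) * z₁ ^ 2 /
          ((c : ℂ) * τ + (d : ℂ)))) =
    psi k m
        (τ - (c : ℂ) * u ^ 2 / ((c : ℂ) * ζ + (a : ℂ)))
        (u / ((c : ℂ) * ζ + (a : ℂ)))
        (((d : ℂ) * ζ + (b : ℂ)) / ((c : ℂ) * ζ + (a : ℂ)))
        (z₁ - (c : ℂ) * u * z₂ / ((c : ℂ) * ζ + (a : ℂ)))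
        (z₂ / ((c : ℂ) * ζ + (a : ℂ))) *
      (((c : ℂ) * ζ + (a : ℂ)) ^ k *
        Complex.exp (2 * (Real.pi : ℂ) * I * (m : ℂ) * (c : ℂ) * z₂ ^ 2 /
          ((c : ℂ) * ζ + (a : ℂ)))) := by
  -- basic positivity facts from positive-definiteness of Im T
  have hy1 : 0 < τ.im := by
    have := hT.dotProduct_mulVec_pos (x := ![1,0]) (by simp [Function.ne_iff])
    simpa [Matrix.mulVec, dotProduct, Fin.sum_univ_two] using this
  have hy3 : 0 < ζ.im := by
    have := hT.dotProduct_mulVec_pos (x := ![0,1]) (by simp [Function.ne_iff])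
    simpa [Matrix.mulVec, dotProduct, Fin.sum_univ_two] using this
  have hdet : 0 < τ.im * ζ.im - u.im * u.im := by
    have := hT.det_pos
    rwa [Matrix.det_fin_two_of] at this
  have hgC : (a:ℂ)*d - b*c = 1 := by exact_mod_cast hg
  -- the relevant denominators are nonzero
  have hA : (c:ℂ)*τ + d ≠ 0 := by
    rcases eq_or_ne c 0 with hc | hc
    · have hd : d ≠ 0 := by
        intro h; rw [hc, h] at hg; simp at hg
      simp [hc, hd]
    · intro h
      have him := congrArg Complex.im h
      simp only [Complex.add_im, Complex.mul_im, Complex.ofReal_re, Complex.ofReal_im,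
        Complex.zero_im, zero_mul, add_zero, mul_zero, zero_add] at him
      exact mul_ne_zero hc hy1.ne' him
  have hB : (c:ℂ)*ζ + a ≠ 0 := by
    rcases eq_or_ne c 0 with hc | hc
    · have ha : a ≠ 0 := by
        intro h; rw [hc, h] at hg; simp at hg
      simp [hc, ha]
    · intro h
      have him := congrArg Complex.im h
      simp only [Complex.add_im, Complex.mul_im, Complex.ofReal_re, Complex.ofReal_im,
        Complex.zero_im, zero_mul, add_zero, mul_zero, zero_add] at him
      exact mul_ne_zero hc hy3.ne' him
  have hQ : (c:ℂ)*(τ*ζ - u^2) + a*τ + b + d*ζ + 2*u ≠ 0 := by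
    have key : ((((c:ℂ)*(τ*ζ - u^2) + a*τ + b + d*ζ + 2*u)) * (starRingEnd ℂ) ((c:ℂ)*τ + d)).im
        = τ.im*(1 - c*u.re)^2 + 2*u.im*((1 - c*u.re)*(c*τ.re + d)) + ζ.im*(c*τ.re + d)^2
          + c^2*τ.im*(τ.im*ζ.im - u.im*u.im) := by
      simp only [Complex.mul_im, Complex.mul_re, Complex.add_im, Complex.add_re, Complex.sub_im,
        Complex.sub_re, Complex.ofReal_re, Complex.ofReal_im, Complex.conj_re, Complex.conj_im,
        pow_two, Complex.re_ofNat, Complex.im_ofNat]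
      linear_combination τ.im * hg
    have hpos : 0 < τ.im*(1 - c*u.re)^2 + 2*u.im*((1 - c*u.re)*(c*τ.re + d)) + ζ.im*(c*τ.re + d)^2
          + c^2*τ.im*(τ.im*ζ.im - u.im*u.im) := by
      rcases eq_or_ne c 0 with hc | hc
      · have hd : d ≠ 0 := by
          intro h; rw [hc, h] at hg; simp at hg
        subst hc
        nlinarith [sq_nonneg (τ.im + u.im*d), mul_pos hdet (by positivity : (0:ℝ) < d^2), hy1]
      · nlinarith [sq_nonneg (τ.im*(1 - c*u.re) + u.im*(c*τ.re + d)),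
          mul_pos (mul_pos (by positivity : (0:ℝ) < c^2) (by positivity : (0:ℝ) < τ.im^2)) hdet,
          mul_nonneg hdet.le (sq_nonneg (c*τ.re + d)), hy1]
    intro h
    rw [h, zero_mul] at key
    simp only [Complex.zero_im] at key
    rw [← key] at hpos
    exact lt_irrefl 0 hpos
  -- rewrite the two "trace" sums
  have hsum1 : ((a:ℂ)*τ + b)/((c:ℂ)*τ + d) + 2*(u/((c:ℂ)*τ + d)) + (ζ - (c:ℂ)*u^2/((c:ℂ)*τ + d))
      = ((c:ℂ)*(τ*ζ - u^2) + a*τ + b + d*ζ + 2*u)/((c:ℂ)*τ + d) := by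
    linear_combination (-ζ) * mul_inv_cancel₀ hA
  have hsum2 : (τ - (c:ℂ)*u^2/((c:ℂ)*ζ + a)) + 2*(u/((c:ℂ)*ζ + a)) + ((d:ℂ)*ζ + b)/((c:ℂ)*ζ + a)
      = ((c:ℂ)*(τ*ζ - u^2) + a*τ + b + d*ζ + 2*u)/((c:ℂ)*ζ + a) := by
    linear_combination (-τ) * mul_inv_cancel₀ hB
  simp only [psi]
  rw [hsum1, hsum2, div_zpow, div_zpow]
  have key : ∀ X E F : ℂ, X ≠ 0 →
      ((c:ℂ)*(τ*ζ - u^2) + a*τ + b + d*ζ + 2*u)^k / X^k * Complex.exp E * (X^k * Complex.exp F)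
        = ((c:ℂ)*(τ*ζ - u^2) + a*τ + b + d*ζ + 2*u)^k * Complex.exp (E+F) := by
    intro X E F hX
    rw [Complex.exp_add]
    have hXk : X^k ≠ 0 := zpow_ne_zero _ hX
    field_simp
  rw [key _ _ _ hA, key _ _ _ hB]
  congr 1
  apply congrArg
  -- equality of the exponents
  have hI : ((c:ℂ)*ζ + a)*(z₁*(1 - (c:ℂ)*u) + ((c:ℂ)*τ + d)*z₂)^2
        + (c:ℂ)*z₁^2*(((c:ℂ)*ζ + a)*((c:ℂ)*(τ*ζ - u^2) + a*τ + b + d*ζ + 2*u))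
      = ((c:ℂ)*τ + d)*(((c:ℂ)*ζ + a)*z₁ + z₂*(1 - (c:ℂ)*u))^2
        + (c:ℂ)*z₂^2*(((c:ℂ)*τ + d)*((c:ℂ)*(τ*ζ - u^2) + a*τ + b + d*ζ + 2*u)) := by
    linear_combination (((c:ℂ)*τ + d)*z₂^2 - ((c:ℂ)*ζ + a)*z₁^2) * hgC
  have e1 : 2 * (Real.pi:ℂ) * I * (m:ℂ) * (z₁/((c:ℂ)*τ + d) + (z₂ - (c:ℂ)*u*z₁/((c:ℂ)*τ + d)))^2
        / (((c:ℂ)*(τ*ζ - u^2) + a*τ + b + d*ζ + 2*u)/((c:ℂ)*τ + d))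
      + 2 * (Real.pi:ℂ) * I * (m:ℂ) * c * z₁^2 / ((c:ℂ)*τ + d)
      = 2 * (Real.pi:ℂ) * I * (m:ℂ) *
          (((c:ℂ)*ζ + a)*(z₁*(1 - (c:ℂ)*u) + ((c:ℂ)*τ + d)*z₂)^2
            + (c:ℂ)*z₁^2*(((c:ℂ)*ζ + a)*((c:ℂ)*(τ*ζ - u^2) + a*τ + b + d*ζ + 2*u)))
        / (((c:ℂ)*τ + d) * (((c:ℂ)*ζ + a) * ((c:ℂ)*(τ*ζ - u^2) + a*τ + b + d*ζ + 2*u))) := by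
    field_simp
    rw [div_add' _ _ _ (by intro h; apply hQ; linear_combination h)]
    ring
  have e2 : 2 * (Real.pi:ℂ) * I * (m:ℂ) * ((z₁ - (c:ℂ)*u*z₂/((c:ℂ)*ζ + a)) + z₂/((c:ℂ)*ζ + a))^2
        / (((c:ℂ)*(τ*ζ - u^2) + a*τ + b + d*ζ + 2*u)/((c:ℂ)*ζ + a))
      + 2 * (Real.pi:ℂ) * I * (m:ℂ) * c * z₂^2 / ((c:ℂ)*ζ + a)
      = 2 * (Real.pi:ℂ) * I * (m:ℂ) *
          (((c:ℂ)*τ + d)*(((c:ℂ)*ζ + a)*z₁ + z₂*(1 - (c:ℂ)*u))^2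
            + (c:ℂ)*z₂^2*(((c:ℂ)*τ + d)*((c:ℂ)*(τ*ζ - u^2) + a*τ + b + d*ζ + 2*u)))
        / (((c:ℂ)*τ + d) * (((c:ℂ)*ζ + a) * ((c:ℂ)*(τ*ζ - u^2) + a*τ + b + d*ζ + 2*u))) := by
    field_simp
    rw [div_add' _ _ _ (by intro h; apply hQ; linear_combination h)]
    ring
  rw [e1, e2, hI]
end

section
/- Fix k ∈ ℤ and a positive integer m. For Λ, Μ ∈ ℝ² and Κ ∈ ℝ define the Heisenberg action (Λ,Μ,Κ)∘(T,Z) := (T, Z + ΛT + Μ) on ℍ₂×ℂ² and the automorphy factor J_m((Λ,Μ,Κ),(T,Z)) := exp(−2πi·m·(Λ T Λᵀ + 2ΛZᵀ + Κ + ΜΛᵀ)). Then for all real λ, μ, κ and all (T,Z) ∈ ℍ₂×ℂ²: (i) ψ_{k,m}(((λ,0),(0,0),0)∘(T,Z)) · J_m(((λ,0),(0,0),0),(T,Z)) = ψ_{k,m}(((0,−λ),(0,0),0)∘(T,Z)) · J_m(((0,−λ),(0,0),0),(T,Z)); and (ii) ψ_{k,m}(((0,0),(μ,0),κ)∘(T,Z))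 · J_m(((0,0),(μ,0),κ),(T,Z)) = ψ_{k,m}(((0,0),(0,μ),κ)∘(T,Z)) · J_m(((0,0),(0,μ),κ),(T,Z)). Equivalently, ψ_{k,m}^{-1} slashed with the embedded Heisenberg element (λ,0,0)↑ equals ψ_{k,m}^{-1} slashed with (−λ,0,0)↓, and ψ_{k,m}^{-1} slashed with (0,μ,κ)↑ equals ψ_{k,m}^{-1} slashed with (0,μ,κ)↓. -/
/-!
STATEMENT 11: The Heisenberg analogue of the ψ-duality: for the degree-2 Heisenberg
action (Λ,Μ,Κ)∘(T,Z) = (T, Z+ΛT+Μ) with automorphy factor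
J_m((Λ,Μ,Κ),(T,Z)) = exp(−2πi·m·(ΛTΛᵀ + 2ΛZᵀ + Κ + ΜΛᵀ)), one has
(i) ψ_{k,m} slashed with ((λ,0),(0,0),0) equals ψ_{k,m} slashed with ((0,−λ),(0,0),0);
(ii) ψ_{k,m} slashed with ((0,0),(μ,0),κ) equals ψ_{k,m} slashed with ((0,0),(0,μ),κ).
-/

open Complex

/-- First coordinate of `Z + ΛT + Μ` for `Λ = (l₁,l₂)`, `Μ = (m₁,m₂)`,
`T = [[τ,u],[u,ζ]]`, `Z = (z₁,z₂)`. -/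
noncomputable def heisZ₁ (l₁ l₂ m₁ : ℝ) (τ u z₁ : ℂ) : ℂ :=
  z₁ + (l₁ : ℂ) * τ + (l₂ : ℂ) * u + (m₁ : ℂ)

/-- Second coordinate of `Z + ΛT + Μ`. -/
noncomputable def heisZ₂ (l₁ l₂ m₂ : ℝ) (u ζ z₂ : ℂ) : ℂ :=
  z₂ + (l₁ : ℂ) * u + (l₂ : ℂ) * ζ + (m₂ : ℂ)

/-- The automorphy factor
`J_m((Λ,Μ,Κ),(T,Z)) = exp(−2πi·m·(ΛTΛᵀ + 2ΛZᵀ + Κ + ΜΛᵀ))`. -/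
noncomputable def heisJ (m : ℕ) (l₁ l₂ m₁ m₂ kap : ℝ) (τ u ζ z₁ z₂ : ℂ) : ℂ :=
  Complex.exp (-(2 * (Real.pi : ℂ) * I * (m : ℂ) *
    ((l₁ : ℂ) ^ 2 * τ + 2 * (l₁ : ℂ) * (l₂ : ℂ) * u + (l₂ : ℂ) ^ 2 * ζ +
      2 * ((l₁ : ℂ) * z₁ + (l₂ : ℂ) * z₂) + (kap : ℂ) +
      ((m₁ : ℂ) * (l₁ : ℂ) + (m₂ : ℂ) * (l₂ : ℂ)))))

theorem psi_heisenberg_up_down_duality (k : ℤ) (m : ℕ) (hm : 0 < m)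
    (lam mu kap : ℝ) (τ u ζ z₁ z₂ : ℂ)
    (hT : (!![τ.im, u.im; u.im, ζ.im] : Matrix (Fin 2) (Fin 2) ℝ).PosDef) :
    (psi k m τ u ζ (heisZ₁ lam 0 0 τ u z₁) (heisZ₂ lam 0 0 u ζ z₂) *
        heisJ m lam 0 0 0 0 τ u ζ z₁ z₂ =
      psi k m τ u ζ (heisZ₁ 0 (-lam) 0 τ u z₁) (heisZ₂ 0 (-lam) 0 u ζ z₂) *
        heisJ m 0 (-lam) 0 0 0 τ u ζ z₁ z₂)
    ∧
    (psi k m τ u ζ (heisZ₁ 0 0 mu τ u z₁) (heisZ₂ 0 0 0 u ζ z₂) *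
        heisJ m 0 0 mu 0 kap τ u ζ z₁ z₂ =
      psi k m τ u ζ (heisZ₁ 0 0 0 τ u z₁) (heisZ₂ 0 0 mu u ζ z₂) *
        heisJ m 0 0 0 mu kap τ u ζ z₁ z₂) := by
  have hpos : 0 < τ.im + 2 * u.im + ζ.im := by
    have h := hT.dotProduct_mulVec_pos (x := ![1, 1]) (by
      intro h; have := congrFun h 0; simp at this)
    have : (0:ℝ) < τ.im + u.im + (u.im + ζ.im) := by
      simpa [dotProduct, Matrix.mulVec, Fin.sum_univ_two] using h
    linarith
  have hD : τ + 2 * u + ζ ≠ 0 := by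
    intro h
    have : (τ + 2 * u + ζ).im = 0 := by rw [h]; simp
    simp [Complex.add_im, Complex.mul_im] at this
    linarith
  constructor
  · simp only [psi, heisZ₁, heisZ₂, heisJ]
    push_cast
    simp only [mul_assoc, ← Complex.exp_add]
    congr 2
    field_simp
    ring
  · simp only [psi, heisZ₁, heisZ₂, heisJ]
    push_cast
    simp only [mul_assoc, ← Complex.exp_add]
    congr 2
    ring
end

section
/- Let p be a prime and let m ≥ 1, r₂ and λ be integers with p ∤ 2m. Then the map (n₁₁, n₁₂, r₁) ↦ (n₁₁′, n₁₂′, r₁′) := (p²n₁₁ + pλr₁ + λ²m, pn₁₂ + λr₂, pr₁ + 2λm) is a bijection from ℤ³ onto the set of triples (n₁₁′, n₁₂′, r₁′) ∈ ℤ³ satisfying r₁′ ≡ 2λm (mod p), r₁′² − 4m·n₁₁′ ≡ 0 (mod p²), and r₁′·r₂ − 2m·n₁₂′ ≡ 0 (mod p). Moreover, under this map the invariants transform by r₁′² − 4m·n₁₁′ = p²·(r₁² − 4m·n₁₁) and r₁′·r₂ − 2m·n₁₂′ = p·(r₁·r₂ − 2m·n₁₂). -/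
/-!
STATEMENT 12: For a prime p, integers m ≥ 1, r₂, λ with p ∤ 2m, the change of
variables (n₁₁, n₁₂, r₁) ↦ (p²n₁₁ + pλr₁ + λ²m, pn₁₂ + λr₂, pr₁ + 2λm) is a
bijection from ℤ³ onto the set of triples (n₁₁′, n₁₂′, r₁′) with r₁′ ≡ 2λm (mod p),
p² ∣ r₁′² − 4m·n₁₁′ and p ∣ r₁′r₂ − 2m·n₁₂′; moreover the invariants transform by
r₁′² − 4m·n₁₁′ = p²(r₁² − 4m·n₁₁) and r₁′r₂ − 2m·n₁₂′ = p(r₁r₂ − 2m·n₁₂).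
-/

/-- The change of variables attached to the representative `N₁ = diag(p²,1)`:
`(n₁₁, n₁₂, r₁) ↦ (p²n₁₁ + pλr₁ + λ²m, pn₁₂ + λr₂, pr₁ + 2λm)`. -/
def changeVar (p : ℕ) (m r₂ lam : ℤ) : ℤ × ℤ × ℤ → ℤ × ℤ × ℤ :=
  fun t => ((p : ℤ) ^ 2 * t.1 + (p : ℤ) * lam * t.2.2 + lam ^ 2 * m,
            (p : ℤ) * t.2.1 + lam * r₂,
            (p : ℤ) * t.2.2 + 2 * lam * m)
theorem changeVar_bijection_and_invariants (p : ℕ) (hp : p.Prime) (m : ℤ)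
    (hm : 1 ≤ m) (r₂ lam : ℤ) (hpm : ¬ (p : ℤ) ∣ 2 * m) :
    (∀ n₁₁ n₁₂ r₁ : ℤ,
      ((changeVar p m r₂ lam (n₁₁, n₁₂, r₁)).2.2 ≡ 2 * lam * m [ZMOD (p : ℤ)]) ∧
      ((p : ℤ) ^ 2 ∣ (changeVar p m r₂ lam (n₁₁, n₁₂, r₁)).2.2 ^ 2 -
          4 * m * (changeVar p m r₂ lam (n₁₁, n₁₂, r₁)).1) ∧
      ((p : ℤ) ∣ (changeVar p m r₂ lam (n₁₁, n₁₂, r₁)).2.2 * r₂ -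
          2 * m * (changeVar p m r₂ lam (n₁₁, n₁₂, r₁)).2.1) ∧
      ((changeVar p m r₂ lam (n₁₁, n₁₂, r₁)).2.2 ^ 2 -
          4 * m * (changeVar p m r₂ lam (n₁₁, n₁₂, r₁)).1 =
        (p : ℤ) ^ 2 * (r₁ ^ 2 - 4 * m * n₁₁)) ∧
      ((changeVar p m r₂ lam (n₁₁, n₁₂, r₁)).2.2 * r₂ -
          2 * m * (changeVar p m r₂ lam (n₁₁, n₁₂, r₁)).2.1 =
        (p : ℤ) * (r₁ * r₂ - 2 * m * n₁₂)))
    ∧ Function.Injective (changeVar p m r₂ lam)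
    ∧ (∀ n₁₁' n₁₂' r₁' : ℤ,
        (r₁' ≡ 2 * lam * m [ZMOD (p : ℤ)]) →
        ((p : ℤ) ^ 2 ∣ r₁' ^ 2 - 4 * m * n₁₁') →
        ((p : ℤ) ∣ r₁' * r₂ - 2 * m * n₁₂') →
        ∃ t : ℤ × ℤ × ℤ, changeVar p m r₂ lam t = (n₁₁', n₁₂', r₁')) := by
  have hp0 : (p : ℤ) ≠ 0 := Int.natCast_ne_zero.mpr hp.pos.ne'
  have hpprime : Prime (p : ℤ) := Nat.prime_iff_prime_int.mp hp
  have hcop2m : IsCoprime (p : ℤ) (2 * m) :=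
    (hpprime.coprime_iff_not_dvd).2 hpm
  refine ⟨?_, ?_, ?_⟩
  · intro n₁₁ n₁₂ r₁
    refine ⟨?_, ⟨r₁ ^ 2 - 4 * m * n₁₁, by simp [changeVar]; ring⟩,
      ⟨r₁ * r₂ - 2 * m * n₁₂, by simp [changeVar]; ring⟩,
      by simp [changeVar]; ring, by simp [changeVar]; ring⟩
    show (p : ℤ) * r₁ + 2 * lam * m ≡ 2 * lam * m [ZMOD (p : ℤ)]
    exact Int.modEq_iff_dvd.2 ⟨-r₁, by ring⟩
  · rintro ⟨a, b, c⟩ ⟨a', b', c'⟩ h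
    simp only [changeVar, Prod.mk.injEq] at h
    obtain ⟨h1, h2, h3⟩ := h
    have hc : c = c' := mul_left_cancel₀ hp0 (by linarith)
    subst hc
    have hb : b = b' := mul_left_cancel₀ hp0 (by linarith)
    have ha : a = a' := mul_left_cancel₀ (pow_ne_zero 2 hp0) (by linarith)
    simp [ha, hb]
  · intro n₁₁' n₁₂' r₁' h1 h2 h3
    obtain ⟨r₁, hr₁⟩ : (p : ℤ) ∣ r₁' - 2 * lam * m := Int.ModEq.dvd h1.symm
    have hr : r₁' = (p : ℤ) * r₁ + 2 * lam * m := by linarith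
    obtain ⟨n₁₂, hn₁₂⟩ : (p : ℤ) ∣ n₁₂' - lam * r₂ := by
      have hd : (p : ℤ) ∣ 2 * m * (n₁₂' - lam * r₂) := by
        have : 2 * m * (n₁₂' - lam * r₂) =
            (p:ℤ) * (r₁ * r₂) - (r₁' * r₂ - 2 * m * n₁₂') := by rw [hr]; ring
        rw [this]; exact dvd_sub (Dvd.intro _ rfl) h3
      exact hcop2m.dvd_of_dvd_mul_left hd
    obtain ⟨n₁₁, hn₁₁⟩ : (p : ℤ) ^ 2 ∣ n₁₁' - ((p : ℤ) * lam * r₁ + lam ^ 2 * m) := by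
      have hd : (p : ℤ) ^ 2 ∣ 4 * m * (n₁₁' - ((p : ℤ) * lam * r₁ + lam ^ 2 * m)) := by
        have : 4 * m * (n₁₁' - ((p : ℤ) * lam * r₁ + lam ^ 2 * m)) =
            (p:ℤ)^2 * r₁^2 - (r₁' ^ 2 - 4 * m * n₁₁') := by rw [hr]; ring
        rw [this]; exact dvd_sub (Dvd.intro _ rfl) h2
      have hcop4 : IsCoprime ((p : ℤ)^2) (4 * m) := by
        have : IsCoprime (p : ℤ) (4 * m) := by
          have h2' : IsCoprime (p : ℤ) 2 := by
            rcases hcop2m.isUnit_of_dvd' dvd_rfl with _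
            exact (hpprime.coprime_iff_not_dvd).2
              (fun h => hpm (h.mul_right m))
          have hm' : IsCoprime (p : ℤ) m := by
            exact (hpprime.coprime_iff_not_dvd).2
              (fun h => hpm (Dvd.dvd.mul_left h 2))
          have : IsCoprime (p:ℤ) (2 * (2 * m)) := h2'.mul_right hcop2m
          have e : 2 * (2 * m) = 4 * m := by ring
          rwa [e] at this
        exact this.pow_left
      exact hcop4.dvd_of_dvd_mul_left hd
    refine ⟨(n₁₁, n₁₂, r₁), ?_⟩
    simp only [changeVar, Prod.mk.injEq]
    refine ⟨by linarith, by linarith, by linarith⟩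
end
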